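/- Let X ⊆ ℝ^m be nonempty, closed, and convex, and let c : ℝ^m → ℝ^m be continuous on X. If x* ∈ X is ⪯_c-minimal, then x* is a critical element of (X, c), i.e., ⟨x − x*, c(x*)⟩ ≥ 0 for all x ∈ X. -/

import Mathlib

open Set

noncomputable section

/-- The path point `y_ε = ε x + (1 - ε) y`. -/
def pathPt {m : ℕ} (x y : EuclideanSpace ℝ (Fin m)) (ε : ℝ) :
    EuclideanSpace ℝ (Fin m) :=
  ε • x + (1 - ε) • y

/-- The linear vector polyorder `x ⪯_c y`: for all `ε ∈ [0,1]`,
`⟨x, c(y_ε)⟩ ≤ ⟨y, c(y_ε)⟩`. -/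
def vecLe {m : ℕ} (c : EuclideanSpace ℝ (Fin m) → EuclideanSpace ℝ (Fin m))
    (x y : EuclideanSpace ℝ (Fin m)) : Prop :=
  ∀ ε ∈ Icc (0:ℝ) 1,
    (inner ℝ x (c (pathPt x y ε)) : ℝ) ≤ inner ℝ y (c (pathPt x y ε))

/-- The strict part `x ≺_c y` of the linear vector polyorder. -/
def vecLt {m : ℕ} (c : EuclideanSpace ℝ (Fin m) → EuclideanSpace ℝ (Fin m))
    (x y : EuclideanSpace ℝ (Fin m)) : Prop :=
  vecLe c x y ∧ ¬ vecLe c y x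

/-- `x*` is `⪯_c`-minimal in `X`: no element of `X` strictly dominates it. -/
def vecMinimal {m : ℕ} (X : Set (EuclideanSpace ℝ (Fin m)))
    (c : EuclideanSpace ℝ (Fin m) → EuclideanSpace ℝ (Fin m))
    (xs : EuclideanSpace ℝ (Fin m)) : Prop :=
  ∀ x ∈ X, ¬ vecLt c x xs

/-- A `⪯_c`-minimal element is a critical element of `(X, c)`. -/
theorem vecMinimal_isCritical {m : ℕ} (X : Set (EuclideanSpace ℝ (Fin m)))
    (hXne : X.Nonempty) (hXcl : IsClosed X) (hXconv : Convex ℝ X)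
    (c : EuclideanSpace ℝ (Fin m) → EuclideanSpace ℝ (Fin m)) (hc : ContinuousOn c X)
    (xs : EuclideanSpace ℝ (Fin m)) (hxs : xs ∈ X)
    (hmin : vecMinimal X c xs) :
    ∀ x ∈ X, (0:ℝ) ≤ inner ℝ (x - xs) (c xs) := by
  intro x hx
  by_contra hneg
  push_neg at hneg
  set g : ℝ → EuclideanSpace ℝ (Fin m) := fun t => xs + t • (x - xs) with hg
  have hgX : ∀ t ∈ Icc (0:ℝ) 1, g t ∈ X := by
    intro t ht
    have heq : g t = (1 - t) • xs + t • x := by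
      simp only [hg]; module
    rw [heq]
    exact hXconv hxs hx (by linarith [ht.2]) ht.1 (by ring)
  set f : ℝ → ℝ := fun t => inner ℝ (x - xs) (c (g t)) with hf
  have hg0 : g 0 = xs := by simp [hg]
  have hf0 : f 0 < 0 := by simpa [hf, hg0] using hneg
  have hgC : Continuous g := by continuity
  have hfC : ContinuousOn f (Icc (0:ℝ) 1) :=
    ContinuousOn.inner continuousOn_const (hc.comp hgC.continuousOn hgX)
  have hcw : ContinuousWithinAt f (Icc (0:ℝ) 1) 0 :=
    hfC.continuousWithinAt (by norm_num)
  have hev : ∀ᶠ t in nhdsWithin 0 (Icc (0:ℝ) 1), f t < 0 :=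
    hcw.eventually_lt_const hf0
  rw [eventually_nhdsWithin_iff, Metric.eventually_nhds_iff] at hev
  obtain ⟨ε, hε, hball⟩ := hev
  set δ : ℝ := min (ε / 2) 1 with hδ
  have hδpos : 0 < δ := by positivity
  have hδ1 : δ ≤ 1 := min_le_right _ _
  have hδε : δ < ε := lt_of_le_of_lt (min_le_left _ _) (by linarith)
  have hflt : ∀ t ∈ Icc (0:ℝ) δ, f t < 0 := by
    intro t ht
    refine hball ?_ ⟨ht.1, le_trans ht.2 hδ1⟩
    rw [Real.dist_eq, sub_zero, abs_of_nonneg ht.1]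
    linarith [ht.2]
  set x' : EuclideanSpace ℝ (Fin m) := g δ with hx'def
  have hx' : x' ∈ X := hgX δ ⟨hδpos.le, hδ1⟩
  have hsub : x' - xs = δ • (x - xs) := by simp [hx'def, hg]
  have key : ∀ z, (inner ℝ x' (c z) : ℝ) - inner ℝ xs (c z)
      = δ * inner ℝ (x - xs) (c z) := by
    intro z
    rw [← inner_sub_left, hsub, real_inner_smul_left]
  have hle : vecLe c x' xs := by
    intro ε' hε'
    have hpath : pathPt x' xs ε' = g (ε' * δ) := by
      simp only [pathPt, hx'def, hg]; module
    have hmem : ε' * δ ∈ Icc (0:ℝ) δ :=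
      ⟨mul_nonneg hε'.1 hδpos.le, by nlinarith [hε'.2, hδpos]⟩
    have hneg' : f (ε' * δ) < 0 := hflt _ hmem
    have := key (g (ε' * δ))
    rw [hpath]
    have : (inner ℝ x' (c (g (ε' * δ))) : ℝ) - inner ℝ xs (c (g (ε' * δ)))
        = δ * f (ε' * δ) := key (g (ε' * δ))
    nlinarith [mul_neg_of_pos_of_neg hδpos hneg']
  have hnle : ¬ vecLe c xs x' := by
    intro hcl
    have h0 := hcl 0 ⟨le_refl _, zero_le_one⟩
    have hpath : pathPt xs x' 0 = g δ := by
      simp only [pathPt, hx'def, hg]; module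
    rw [hpath] at h0
    have hd : f δ < 0 := hflt δ ⟨hδpos.le, le_refl _⟩
    have := key (g δ)
    nlinarith [mul_neg_of_pos_of_neg hδpos hd]
  exact hmin x' hx' ⟨hle, hnle⟩
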